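/- Let a, b : ℕ → ℝ be per-view reward sequences with a_i ≥ 0 and b_i ≥ 0 for all i, a_i + b_i ≤ M for all i and some constant M, and suppose there is a constant c > 0 such that Σ_{i<m} (a_i + b_i) ≥ c·m for every m ≥ 1. Then the transformed value decreases strictly at rate at least c: for all ρ1 ≤ ρ2, v_{ρ2} ≤ v_{ρ1} − (ρ2 − ρ1)·c, where v_ρ = liminf_{m→∞} (1/m) Σ_{i<m} ((1−ρ)·a_i − ρ·b_i). -/
import Mathlib


open Filter Finset

/-- The transformed value `v_ρ = liminf (1/m) Σ_{i<m} ((1-ρ)·a_i − ρ·b_i)`. -/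
noncomputable def transformedValue (a b : ℕ → ℝ) (ρ : ℝ) : ℝ :=
  liminf (fun m : ℕ =>
    (1 / (m : ℝ)) * ∑ i ∈ range m, ((1 - ρ) * a i - ρ * b i)) atTop

lemma transformed_abs_bound (a b : ℕ → ℝ) (M : ℝ)
    (ha : ∀ i, 0 ≤ a i) (hb : ∀ i, 0 ≤ b i) (hM : ∀ i, a i + b i ≤ M) (ρ : ℝ) (m : ℕ) :
    |(1 / (m : ℝ)) * ∑ i ∈ range m, ((1 - ρ) * a i - ρ * b i)| ≤ (|1 - ρ| + |ρ|) * max M 0 := by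
  have hK : 0 ≤ (|1 - ρ| + |ρ|) * max M 0 := by positivity
  rcases Nat.eq_zero_or_pos m with rfl | hm
  · simpa using hK
  have hterm : ∀ i, |(1 - ρ) * a i - ρ * b i| ≤ (|1 - ρ| + |ρ|) * max M 0 := by
    intro i
    have h1 : |(1 - ρ) * a i - ρ * b i| ≤ |1 - ρ| * a i + |ρ| * b i := by
      calc |(1 - ρ) * a i - ρ * b i| ≤ |(1 - ρ) * a i| + |ρ * b i| := abs_sub _ _
      _ = |1 - ρ| * a i + |ρ| * b i := by
          rw [abs_mul, abs_mul, abs_of_nonneg (ha i), abs_of_nonneg (hb i)]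
    have haM : a i ≤ max M 0 := le_trans (le_add_of_nonneg_right (hb i))
      (le_max_of_le_left (hM i))
    have hbM : b i ≤ max M 0 := le_trans (le_add_of_nonneg_left (ha i))
      (le_max_of_le_left (hM i))
    calc |(1 - ρ) * a i - ρ * b i| ≤ |1 - ρ| * a i + |ρ| * b i := h1
      _ ≤ |1 - ρ| * max M 0 + |ρ| * max M 0 :=
          add_le_add (mul_le_mul_of_nonneg_left haM (abs_nonneg _))
            (mul_le_mul_of_nonneg_left hbM (abs_nonneg _))
      _ = (|1 - ρ| + |ρ|) * max M 0 := by ring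
  have hsum : |∑ i ∈ range m, ((1 - ρ) * a i - ρ * b i)| ≤ m * ((|1 - ρ| + |ρ|) * max M 0) := by
    calc |∑ i ∈ range m, ((1 - ρ) * a i - ρ * b i)|
        ≤ ∑ i ∈ range m, |(1 - ρ) * a i - ρ * b i| := Finset.abs_sum_le_sum_abs _ _
      _ ≤ ∑ _i ∈ range m, ((|1 - ρ| + |ρ|) * max M 0) := Finset.sum_le_sum fun i _ => hterm i
      _ = m * ((|1 - ρ| + |ρ|) * max M 0) := by simp [mul_comm]
  have hm' : (0 : ℝ) < m := by exact_mod_cast hm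
  rw [abs_mul, abs_of_nonneg (by positivity : (0:ℝ) ≤ 1 / (m:ℝ))]
  rw [div_mul_eq_mul_div, one_mul, div_le_iff₀ hm']
  calc |∑ i ∈ range m, ((1 - ρ) * a i - ρ * b i)| ≤ m * ((|1 - ρ| + |ρ|) * max M 0) := hsum
    _ = (|1 - ρ| + |ρ|) * max M 0 * m := by ring

/-- Under a linear growth condition `Σ_{i<m} (a_i + b_i) ≥ c·m`, the transformed
value decreases strictly at rate at least `c`:
`v_{ρ2} ≤ v_{ρ1} − (ρ2 − ρ1)·c` whenever `ρ1 ≤ ρ2`. -/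
theorem transformedValue_strict_decrease
    (a b : ℕ → ℝ) (M c : ℝ)
    (ha : ∀ i, 0 ≤ a i) (hb : ∀ i, 0 ≤ b i)
    (hM : ∀ i, a i + b i ≤ M) (hc : 0 < c)
    (hgrow : ∀ m : ℕ, 1 ≤ m → c * m ≤ ∑ i ∈ range m, (a i + b i)) :
    ∀ ρ1 ρ2 : ℝ, ρ1 ≤ ρ2 →
      transformedValue a b ρ2 ≤ transformedValue a b ρ1 - (ρ2 - ρ1) * c := by
  intro ρ1 ρ2 hρ
  set g : ℝ → ℕ → ℝ := fun ρ m => (1 / (m : ℝ)) * ∑ i ∈ range m, ((1 - ρ) * a i - ρ * b i)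
    with hg
  have habs := fun ρ => transformed_abs_bound a b M ha hb hM ρ
  have hbdd_le : ∀ ρ, IsBoundedUnder (· ≤ ·) atTop (g ρ) := fun ρ =>
    isBoundedUnder_of ⟨(|1 - ρ| + |ρ|) * max M 0, fun m => (abs_le.mp (habs ρ m)).2⟩
  have hbdd_ge : ∀ ρ, IsBoundedUnder (· ≥ ·) atTop (g ρ) := fun ρ =>
    isBoundedUnder_of ⟨-((|1 - ρ| + |ρ|) * max M 0), fun m => (abs_le.mp (habs ρ m)).1⟩
  have hcob : IsCoboundedUnder (· ≥ ·) atTop (g ρ1) := (hbdd_le ρ1).isCoboundedUnder_ge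
  -- pointwise inequality for m ≥ 1
  have hpt : ∀ᶠ m in atTop, g ρ2 m ≤ g ρ1 m - (ρ2 - ρ1) * c := by
    filter_upwards [eventually_ge_atTop 1] with m hm
    have hm' : (0 : ℝ) < m := by exact_mod_cast hm
    have hsum : ∑ i ∈ range m, ((1 - ρ1) * a i - ρ1 * b i)
        - ∑ i ∈ range m, ((1 - ρ2) * a i - ρ2 * b i)
        = (ρ2 - ρ1) * ∑ i ∈ range m, (a i + b i) := by
      rw [← Finset.sum_sub_distrib, Finset.mul_sum]
      exact Finset.sum_congr rfl fun i _ => by ring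
    have hdecomp : g ρ1 m - g ρ2 m
        = (ρ2 - ρ1) * ((1 / (m : ℝ)) * ∑ i ∈ range m, (a i + b i)) := by
      simp only [hg]
      rw [← mul_sub, hsum]
      ring
    have hgr : c ≤ (1 / (m : ℝ)) * ∑ i ∈ range m, (a i + b i) := by
      rw [div_mul_eq_mul_div, one_mul, le_div_iff₀ hm']
      linarith [hgrow m hm]
    have : (ρ2 - ρ1) * c ≤ g ρ1 m - g ρ2 m := by
      rw [hdecomp]
      exact mul_le_mul_of_nonneg_left hgr (by linarith)
    linarith
  calc transformedValue a b ρ2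
      ≤ liminf (fun m => g ρ1 m - (ρ2 - ρ1) * c) atTop := by
        refine liminf_le_liminf hpt (hbdd_ge ρ2) ?_
        refine IsBoundedUnder.isCoboundedUnder_ge
          (isBoundedUnder_of ⟨(|1 - ρ1| + |ρ1|) * max M 0 - (ρ2 - ρ1) * c, fun m => ?_⟩)
        exact sub_le_sub_right ((abs_le.mp (habs ρ1 m)).2) _
    _ = liminf (g ρ1) atTop - (ρ2 - ρ1) * c :=
        liminf_sub_const atTop (g ρ1) _ hcob (hbdd_ge ρ1)
    _ = transformedValue a b ρ1 - (ρ2 - ρ1) * c := rfl
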